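/- arXiv:1409.0163 — 3 statements merged into one kernel-verified Lean document; each statement's English description precedes it below -/
import Mathlib

section
/- Let n ≥ 1, k ≥ 2, r ≥ 2, and let Γ be a connected graph with r external vertices of degree ≥ 1, v internal vertices of degree ≥ 3, e edges, and first Betti number j ≥ 0. Then (n+k−1)e − (n+k)v ≥ n(r−1) + (n−1)j + (k−2)(r+j−1) + 1 > n(r−1) − 1. -/
/-- for `n ≥ 1`, `k ≥ 2`, `r ≥ 2` and a connected graph with `v ≥ 0`
internal vertices, `e` edges and first Betti number `j ≥ 0` (so `e = v + r + j − 1`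
and, by the valence conditions, `2e ≥ 3v + r`), the degree of the associated form
satisfies `(n+k−1)e − (n+k)v ≥ n(r−1) + (n−1)j + (k−2)(r+j−1) + 1 > n(r−1) − 1`. -/
theorem stmt2 (n k r v e j : ℤ)
    (hn : 1 ≤ n) (hk : 2 ≤ k) (hr : 2 ≤ r) (hv : 0 ≤ v) (hj : 0 ≤ j)
    (hbetti : e = v + r + j - 1)
    (hval : 3 * v + r ≤ 2 * e) :
    n * (r - 1) + (n - 1) * j + (k - 2) * (r + j - 1) + 1
        ≤ (n + k - 1) * e - (n + k) * v
      ∧ n * (r - 1) - 1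
        < n * (r - 1) + (n - 1) * j + (k - 2) * (r + j - 1) + 1 := by
  subst hbetti
  constructor
  · nlinarith [mul_nonneg hv (by linarith : (0:ℤ) ≤ k - 2), mul_nonneg hj (by linarith : (0:ℤ) ≤ n - 1), mul_nonneg hj (by linarith : (0:ℤ) ≤ k - 2)]
  · nlinarith [mul_nonneg hj (by linarith : (0:ℤ) ≤ n - 1), mul_nonneg hj (by linarith : (0:ℤ) ≤ k - 2), mul_nonneg (by linarith : (0:ℤ) ≤ r - 1) (by linarith : (0:ℤ) ≤ k - 2)]
end

section
/- For every integer n ≥ 1, every integer k ≥ 2 and every connected graph Γ with at least one edge (r ≥ 2 external vertices of degree ≥ 1, internal vertices of degree ≥ 3), the degree of the associated form, (n+k−1)e − (n+k)v, strictly exceeds n(r−1) − 1. Consequently no such graph contributes a nonzero form of degree ≤ dim FM_n(r). -/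
/-- for every `n ≥ 1`, `k ≥ 2` and every connected graph with at least
one edge (`e ≥ 1`), `r ≥ 2` external vertices of degree ≥ 1 and internal vertices of
degree ≥ 3 (so `e = v + r + j − 1` with `j ≥ 0` and `2e ≥ 3v + r`), the degree of the
associated form `(n+k−1)e − (n+k)v` strictly exceeds `n(r−1) − 1 = dim FM_n(r)`. -/
theorem stmt3 (n k r v e j : ℤ)
    (hn : 1 ≤ n) (hk : 2 ≤ k) (hr : 2 ≤ r) (hv : 0 ≤ v) (hj : 0 ≤ j)
    (he : 1 ≤ e)
    (hbetti : e = v + r + j - 1)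
    (hval : 3 * v + r ≤ 2 * e) :
    n * (r - 1) - 1 < (n + k - 1) * e - (n + k) * v := by
  nlinarith [mul_nonneg (by linarith : (0:ℤ) ≤ k - 1) hj, mul_nonneg (by linarith : (0:ℤ) ≤ n) hj, mul_nonneg (by linarith : (0:ℤ) ≤ k - 2) hv, mul_nonneg (by linarith : (0:ℤ) ≤ n) (by linarith : (0:ℤ) ≤ 2 * e - 3 * v - r)]
end

section
/- Consider the two-sided (half-infinite) edge-decoration complex D^{±} whose basis elements are strings of bivalent vertices each labeled e_+ or e_−, with differential splitting an e_+-vertex into two e_+-vertices and an e_−-vertex into two e_−-vertices (alternating sum over positions). If the two endpoints of the edge carry opposite labels (one e_+, one e_−), then the complex D^{+−} is acyclic; if the endpoints carry the same label, the homology is one-dimensional, represented by the direct edge (empty string). -/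
/-- Duplicate the `i`-th vertex of the chain `a, w₀, …, w_{len−1}, b` inside the
interior word `w`: insert a copy of that label at position `i` (for `i = 0` this is
the endpoint label `a`, for `i = len+1` the endpoint label `b`). -/
def dupAt (a b : Bool) (w : List Bool) (i : ℕ) : List Bool :=
  w.take i ++ [(a :: w).getD i b] ++ w.drop i

/-- The differential of the edge-decoration complex between endpoints labeled `a` and
`b`: the alternating sum over all vertices (including the endpoints) of splitting that
vertex into two vertices with the same label. -/
noncomputable def edgeDiff (a b : Bool) :
    (List Bool →₀ ℝ) →ₗ[ℝ] (List Bool →₀ ℝ) :=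
  Finsupp.lift (List Bool →₀ ℝ) ℝ (List Bool)
    (fun w => ∑ i ∈ Finset.range (w.length + 2),
      ((-1 : ℝ) ^ i) • Finsupp.single (dupAt a b w i) (1 : ℝ))

lemma dupAt_zero (a b : Bool) (w : List Bool) : dupAt a b w 0 = a :: w := by
  simp [dupAt]

lemma dupAt_cons (a b x : Bool) (w : List Bool) (i : ℕ) :
    dupAt a b (x :: w) (i + 1) = x :: dupAt x b w i := by
  simp [dupAt]

lemma dupAt_nil_one (a b : Bool) : dupAt a b [] 1 = [b] := by
  simp [dupAt]

lemma dupAt_ne_nil (a b : Bool) (w : List Bool) (i : ℕ) : dupAt a b w i ≠ [] := by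
  simp [dupAt]

lemma edgeDiff_single (a b : Bool) (w : List Bool) :
    edgeDiff a b (Finsupp.single w 1) =
      ∑ i ∈ Finset.range (w.length + 2),
        ((-1 : ℝ) ^ i) • Finsupp.single (dupAt a b w i) (1 : ℝ) := by
  simp [edgeDiff, Finsupp.lift_apply, Finsupp.sum_single_index]

/-- the contracting homotopy: delete a leading `a`. -/
noncomputable def contr (a : Bool) : (List Bool →₀ ℝ) →ₗ[ℝ] (List Bool →₀ ℝ) :=
  Finsupp.lift (List Bool →₀ ℝ) ℝ (List Bool)
    (fun w => match w with
      | [] => 0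
      | x :: w' => if x = a then Finsupp.single w' (1 : ℝ) else 0)

lemma contr_single_nil (a : Bool) : contr a (Finsupp.single ([] : List Bool) 1) = 0 := by
  simp [contr, Finsupp.lift_apply, Finsupp.sum_single_index]

lemma contr_single_cons (a x : Bool) (w : List Bool) :
    contr a (Finsupp.single (x :: w) 1) =
      if x = a then Finsupp.single w (1 : ℝ) else 0 := by
  simp [contr, Finsupp.lift_apply, Finsupp.sum_single_index]

lemma key (a b : Bool) (w : List Bool) :
    contr a (edgeDiff a b (Finsupp.single w 1)) +
      edgeDiff a b (contr a (Finsupp.single w 1)) =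
    Finsupp.single w 1 -
      (if w = [] ∧ a = b then Finsupp.single ([] : List Bool) (1 : ℝ) else 0) := by
  cases w with
  | nil =>
    rw [edgeDiff_single]
    simp only [List.length_nil, zero_add]
    rw [Finset.sum_range_succ, Finset.sum_range_one]
    rw [dupAt_zero, dupAt_nil_one, contr_single_nil, map_zero, add_zero,
      map_add, map_smul, map_smul, contr_single_cons, contr_single_cons]
    by_cases hab : a = b
    · simp [hab]
    · have hba : ¬ (b = a) := fun h => hab h.symm
      simp [hba, hab]
  | cons x w' =>
    rw [edgeDiff_single]
    simp only [List.length_cons]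
    rw [Finset.sum_range_succ']
    simp only [dupAt_zero, dupAt_cons, pow_succ, pow_zero, one_smul]
    rw [map_add, map_sum, contr_single_cons]
    simp only [map_smul, contr_single_cons]
    by_cases hx : x = a
    · subst hx
      simp only [eq_self_iff_true, if_true]
      rw [edgeDiff_single]
      have : ∀ i ∈ Finset.range (w'.length + 2),
          ((-1:ℝ)^i * (-1)) • (Finsupp.single (dupAt x b w' i) (1:ℝ)) =
          -(((-1:ℝ)^i) • Finsupp.single (dupAt x b w' i) (1:ℝ)) := by
        intro i _; rw [mul_neg_one, neg_smul]
      rw [Finset.sum_congr rfl this, Finset.sum_neg_distrib]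
      simp
    · simp [hx]

/-- evaluation at the empty word kills the differential -/
lemma ev_nil (a b : Bool) (x : List Bool →₀ ℝ) : (edgeDiff a b x) [] = 0 := by
  have h : (Finsupp.lapply ([] : List Bool)).comp (edgeDiff a b) =
      (0 : (List Bool →₀ ℝ) →ₗ[ℝ] ℝ) := by
    apply Finsupp.lhom_ext
    intro w r
    have : Finsupp.single w r = r • Finsupp.single w (1 : ℝ) := by
      rw [Finsupp.smul_single, smul_eq_mul, mul_one]
    simp only [LinearMap.comp_apply, LinearMap.zero_apply, this, map_smul,
      edgeDiff_single, Finsupp.lapply_apply, Finsupp.finset_sum_apply,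
      Finsupp.smul_apply, Finsupp.single_apply]
    simp [dupAt_ne_nil]
  have := LinearMap.congr_fun h x
  simpa using this

lemma key' (a b : Bool) (x : List Bool →₀ ℝ) :
    contr a (edgeDiff a b x) + edgeDiff a b (contr a x) =
      x - (if a = b then Finsupp.single ([] : List Bool) (x []) else 0) := by
  have h : (contr a).comp (edgeDiff a b) + (edgeDiff a b).comp (contr a) =
      LinearMap.id - (if a = b then
        (Finsupp.lsingle ([] : List Bool)).comp (Finsupp.lapply ([] : List Bool))
        else 0) := by
    apply Finsupp.lhom_ext
    intro w r
    have hr : Finsupp.single w r = r • Finsupp.single w (1 : ℝ) := by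
      rw [Finsupp.smul_single, smul_eq_mul, mul_one]
    simp only [LinearMap.add_apply, LinearMap.comp_apply, LinearMap.sub_apply,
      LinearMap.id_apply, hr, map_smul]
    rw [key]
    by_cases hab : a = b
    · subst hab
      simp only [if_pos rfl]
      cases w with
      | nil => simp [Finsupp.lsingle_apply, Finsupp.smul_single]
      | cons y t => simp [Finsupp.lsingle_apply, Finsupp.single_apply]
    · simp [hab]
  have := LinearMap.congr_fun h x
  simp only [LinearMap.add_apply, LinearMap.comp_apply, LinearMap.sub_apply,
    LinearMap.id_apply] at this
  rw [this]
  by_cases hab : a = b <;> simp [hab, Finsupp.lsingle_apply]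

/-- if the two endpoints of the edge carry opposite labels, the
edge-decoration complex is acyclic; if they carry the same label, its homology is
one-dimensional, represented by the direct edge (the empty word). -/
theorem stmt8 (a b : Bool) :
    (a ≠ b → ∀ x, edgeDiff a b x = 0 → ∃ y, x = edgeDiff a b y)
    ∧ (a = b →
        (∀ x, edgeDiff a b x = 0 →
          ∃ (c : ℝ) (y : List Bool →₀ ℝ),
            x = c • Finsupp.single ([] : List Bool) (1 : ℝ) + edgeDiff a b y)
        ∧ (∀ (c : ℝ) (y : List Bool →₀ ℝ),
            c • Finsupp.single ([] : List Bool) (1 : ℝ) = edgeDiff a b y → c = 0)) := by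
  constructor
  · intro hab x hx
    refine ⟨contr a x, ?_⟩
    have := key' a b x
    rw [hx, map_zero, zero_add, if_neg hab, sub_zero] at this
    exact this.symm
  · intro hab
    constructor
    · intro x hx
      refine ⟨x [], contr a x, ?_⟩
      have := key' a b x
      rw [hx, map_zero, zero_add, if_pos hab] at this
      have h2 : Finsupp.single ([] : List Bool) (x []) =
          x [] • Finsupp.single ([] : List Bool) (1 : ℝ) := by
        rw [Finsupp.smul_single, smul_eq_mul, mul_one]
      rw [h2] at this
      linear_combination (norm := abel) -this
    · intro c y hcy
      have := congrArg (fun f => f ([] : List Bool)) hcy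
      simp only [Finsupp.smul_apply, Finsupp.single_apply, if_pos rfl] at this
      rw [ev_nil] at this
      simpa using this
end
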